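/- Assume (H1), (H3)–(H5), (H8), and let (Y_n^{(0)}, Z_n^{(0)}) solve the stochastic Skorokhod problem SP({ΣU_k}, R) with U_k = A_k c − X_k. Then almost surely there exists a random ℝ₊ᵈ-valued H₀ with Y_n^{(0)} ≪ H₀ for all n ≥ 0, and almost surely ΔY_n^{(0)} = 0 for all sufficiently large n; that is, Y_n^{(0)} is almost surely eventually constant. -/

import Mathlib

open Matrix Finset MeasureTheory ProbabilityTheory

open Filter Topology

noncomputable section

/-- A pair `(ξ, ζ)` solves the linear complementarity problem `LCP(η, M)`. -/
def IsLCPSol {d : ℕ} (M : Matrix (Fin d) (Fin d) ℝ) (η ξ ζ : Fin d → ℝ) : Prop :=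
  ζ = η + M *ᵥ ξ ∧ (∀ i, 0 ≤ ξ i) ∧ (∀ i, 0 ≤ ζ i) ∧ ξ ⬝ᵥ ζ = 0

/-- `(y, z)` solves the Skorokhod problem `SP({a + Σ u_n}, M)` in the orthant. -/
def IsSPSol {d : ℕ} (M : Matrix (Fin d) (Fin d) ℝ) (a : Fin d → ℝ)
    (u y z : ℕ → Fin d → ℝ) : Prop :=
  y 0 = 0 ∧ z 0 = a ∧
  ∀ n, 1 ≤ n →
    z n = z (n - 1) + u n + M *ᵥ (y n - y (n - 1)) ∧
    (∀ i, 0 ≤ z n i) ∧ (∀ i, 0 ≤ y n i - y (n - 1) i) ∧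
    z n ⬝ᵥ (y n - y (n - 1)) = 0

section Aux

variable {d : ℕ}

lemma mulVec_mono {Q : Matrix (Fin d) (Fin d) ℝ} (hQ : ∀ i j, 0 ≤ Q i j)
    {x y : Fin d → ℝ} (h : ∀ i, x i ≤ y i) : ∀ i, (Q *ᵥ x) i ≤ (Q *ᵥ y) i := by
  intro i
  simp only [mulVec, dotProduct]
  exact Finset.sum_le_sum fun j _ => mul_le_mul_of_nonneg_left (h j) (hQ i j)

lemma pos_matrix_eigen (B : Matrix (Fin d) (Fin d) ℝ) (hB : ∀ i j, 0 < B i j)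
    (v : Fin d → ℝ) (hv0 : ∀ i, 0 ≤ v i) (hvne : v ≠ 0) (hsub : ∀ i, v i ≤ (B *ᵥ v) i) :
    ∃ t : ℝ, 1 ≤ t ∧ ∃ u : Fin d → ℝ, (∀ i, 0 ≤ u i) ∧ (∑ i, u i) = 1 ∧ B *ᵥ u = t • u := by
  obtain ⟨j₀, hj₀⟩ : ∃ j, v j ≠ 0 := Function.ne_iff.1 hvne
  have hj₀' : 0 < v j₀ := lt_of_le_of_ne (hv0 j₀) (Ne.symm hj₀)
  set M : ℝ := ∑ i, ∑ j, B i j with hM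
  set K : Set (ℝ × (Fin d → ℝ)) :=
    {p | 0 ≤ p.1 ∧ (∀ i, 0 ≤ p.2 i) ∧ (∑ i, p.2 i) = 1 ∧ ∀ i, p.1 * p.2 i ≤ (B *ᵥ p.2) i}
    with hK
  have hcontmv : ∀ i : Fin d, Continuous fun p : ℝ × (Fin d → ℝ) => (B *ᵥ p.2) i := by
    intro i
    simp only [mulVec, dotProduct]
    exact continuous_finset_sum _ fun j _ =>
      continuous_const.mul ((continuous_apply j).comp continuous_snd)
  have hKeq : K = {p : ℝ × (Fin d → ℝ) | 0 ≤ p.1} ∩ ((⋂ i, {p | 0 ≤ p.2 i}) ∩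
      ({p | ∑ i, p.2 i = 1} ∩ ⋂ i, {p | p.1 * p.2 i ≤ (B *ᵥ p.2) i})) := by
    ext p
    simp only [hK, Set.mem_setOf_eq, Set.mem_inter_iff, Set.mem_iInter]
  have hclosed : IsClosed K := by
    rw [hKeq]
    refine (isClosed_le continuous_const continuous_fst).inter
      (IsClosed.inter ?_ (IsClosed.inter ?_ ?_))
    · exact isClosed_iInter fun i =>
        isClosed_le continuous_const ((continuous_apply i).comp continuous_snd)
    · exact isClosed_eq (continuous_finset_sum _ fun i _ =>
        (continuous_apply i).comp continuous_snd) continuous_const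
    · exact isClosed_iInter fun i => isClosed_le
        (continuous_fst.mul ((continuous_apply i).comp continuous_snd)) (hcontmv i)
  have hcoord_le_one : ∀ p : ℝ × (Fin d → ℝ), p ∈ K → ∀ j, p.2 j ≤ 1 := by
    intro p hp j
    rw [← hp.2.2.1]
    exact Finset.single_le_sum (fun i _ => hp.2.1 i) (mem_univ j)
  have hsubIcc : K ⊆ Set.Icc ((0 : ℝ), (fun _ => 0 : Fin d → ℝ)) (M, fun _ => 1) := by
    intro p hp
    constructor
    · exact ⟨hp.1, fun i => hp.2.1 i⟩
    · constructor
      · calc p.1 = ∑ i, p.1 * p.2 i := by rw [← Finset.mul_sum, hp.2.2.1, mul_one]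
          _ ≤ ∑ i, (B *ᵥ p.2) i := Finset.sum_le_sum fun i _ => hp.2.2.2 i
          _ ≤ M := by
              rw [hM]
              refine Finset.sum_le_sum fun i _ => ?_
              simp only [mulVec, dotProduct]
              exact Finset.sum_le_sum fun j _ => by
                have := hcoord_le_one p hp j
                nlinarith [hB i j, hp.2.1 j]
      · exact fun i => hcoord_le_one p hp i
  have hKcpt : IsCompact K := IsCompact.of_isClosed_subset isCompact_Icc hclosed hsubIcc
  have hs : 0 < ∑ i, v i :=
    Finset.sum_pos' (fun i _ => hv0 i) ⟨j₀, mem_univ _, hj₀'⟩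
  have hmem1 : ((1 : ℝ), (∑ i, v i)⁻¹ • v) ∈ K := by
    refine ⟨zero_le_one, fun i => ?_, ?_, fun i => ?_⟩
    · exact mul_nonneg (inv_nonneg.2 hs.le) (hv0 i)
    · simp only [Pi.smul_apply, smul_eq_mul, ← Finset.mul_sum]
      exact inv_mul_cancel₀ hs.ne'
    · rw [mulVec_smul]
      simp only [Pi.smul_apply, smul_eq_mul, one_mul]
      exact mul_le_mul_of_nonneg_left (hsub i) (inv_nonneg.2 hs.le)
  obtain ⟨p, hpK, hmax⟩ := hKcpt.exists_isMaxOn ⟨_, hmem1⟩ continuous_fst.continuousOn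
  obtain ⟨hp0, hu0, husum, hple⟩ := hpK
  have ht1 : (1 : ℝ) ≤ p.1 := hmax hmem1
  set t := p.1 with htdef
  set u := p.2 with hudef
  -- residual
  set r : Fin d → ℝ := fun i => (B *ᵥ u) i - t * u i with hr
  have hr0 : ∀ i, 0 ≤ r i := fun i => sub_nonneg.2 (hple i)
  by_cases hrz : ∀ i, r i = 0
  · refine ⟨t, ht1, u, hu0, husum, funext fun i => ?_⟩
    have := hrz i
    simp only [hr] at this
    simp only [Pi.smul_apply, smul_eq_mul]
    linarith
  · exfalso
    push_neg at hrz
    obtain ⟨j₁, hj₁⟩ := hrz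
    have hj₁' : 0 < r j₁ := lt_of_le_of_ne (hr0 j₁) (Ne.symm hj₁)
    have hBr : ∀ i, 0 < (B *ᵥ r) i := by
      intro i
      simp only [mulVec, dotProduct]
      have : B i j₁ * r j₁ ≤ ∑ j, B i j * r j :=
        Finset.single_le_sum (fun j _ => mul_nonneg (hB i j).le (hr0 j)) (mem_univ j₁)
      nlinarith [hB i j₁]
    have hcard : Nonempty (Fin d) := ⟨j₁⟩
    set c : ℝ := Finset.univ.inf' (univ_nonempty) (fun i => (B *ᵥ r) i) with hc
    have hcpos : 0 < c := (Finset.lt_inf'_iff _).2 fun i _ => hBr i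
    have hcle : ∀ i, c ≤ (B *ᵥ r) i := fun i => Finset.inf'_le _ (mem_univ i)
    set δ : ℝ := (t + 1)⁻¹ with hδ
    have hδpos : 0 < δ := by positivity
    have htδ : t * δ ≤ 1 := by
      rw [hδ]
      rw [mul_inv_le_iff₀ (by linarith)]
      linarith
    set u' : Fin d → ℝ := fun i => u i + δ * r i with hu'
    have hu'0 : ∀ i, 0 ≤ u' i := fun i => add_nonneg (hu0 i) (mul_nonneg hδpos.le (hr0 i))
    set s' : ℝ := ∑ i, u' i with hs'
    have hs'1 : (1 : ℝ) ≤ s' := by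
      rw [hs', hu']
      calc (1:ℝ) = ∑ i, u i := husum.symm
        _ ≤ ∑ i, (u i + δ * r i) :=
          Finset.sum_le_sum fun i _ => le_add_of_nonneg_right (mul_nonneg hδpos.le (hr0 i))
    have hs'pos : 0 < s' := lt_of_lt_of_le one_pos hs'1
    set γ : ℝ := δ * c / s' with hγ
    have hγpos : 0 < γ := by positivity
    have hu'le : ∀ i, u' i ≤ s' := fun i =>
      Finset.single_le_sum (fun j _ => hu'0 j) (mem_univ i)
    have hBu' : ∀ i, (B *ᵥ u') i = (B *ᵥ u) i + δ * (B *ᵥ r) i := by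
      intro i
      simp only [mulVec, dotProduct, hu', mul_add, Finset.sum_add_distrib, Finset.mul_sum]
      congr 1
      refine Finset.sum_congr rfl fun j _ => by ring
    have hkey : ∀ i, (t + γ) * u' i ≤ (B *ᵥ u') i := by
      intro i
      rw [hBu']
      have h1 : (B *ᵥ u) i = t * u i + r i := by simp [hr]
      have h2 : γ * u' i ≤ δ * c := by
        have hle := hu'le i
        have hmm : δ * c * u' i ≤ δ * c * s' :=
          mul_le_mul_of_nonneg_left hle (by positivity)
        rw [hγ, div_mul_eq_mul_div, div_le_iff₀ hs'pos]
        linarith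
      have h3 : δ * c ≤ δ * (B *ᵥ r) i := by nlinarith [hcle i]
      show (t + γ) * (u i + δ * r i) ≤ (B *ᵥ u) i + δ * (B *ᵥ r) i
      have h2' : γ * (u i + δ * r i) ≤ δ * c := h2
      have h5 : r i * (t * δ) ≤ r i * 1 := mul_le_mul_of_nonneg_left htδ (hr0 i)
      calc (t + γ) * (u i + δ * r i)
          = t * u i + r i * (t * δ) + γ * (u i + δ * r i) := by ring
        _ ≤ t * u i + r i * 1 + δ * c := by linarith
        _ = (t * u i + r i) + δ * c := by ring
        _ ≤ (B *ᵥ u) i + δ * (B *ᵥ r) i := by rw [h1]; linarith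
    have hmem2 : ((t + γ), s'⁻¹ • u') ∈ K := by
      refine ⟨by linarith, fun i => ?_, ?_, fun i => ?_⟩
      · exact mul_nonneg (inv_nonneg.2 hs'pos.le) (hu'0 i)
      · simp only [Pi.smul_apply, smul_eq_mul, ← Finset.mul_sum]
        exact inv_mul_cancel₀ hs'pos.ne'
      · rw [mulVec_smul]
        simp only [Pi.smul_apply, smul_eq_mul]
        calc (t + γ) * (s'⁻¹ * u' i) = s'⁻¹ * ((t + γ) * u' i) := by ring
          _ ≤ s'⁻¹ * (B *ᵥ u') i :=
            mul_le_mul_of_nonneg_left (hkey i) (inv_nonneg.2 hs'pos.le)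
    have hcon : t + γ ≤ t := hmax hmem2
    linarith

lemma nonneg_matrix_eigen (Q : Matrix (Fin d) (Fin d) ℝ) (hQ : ∀ i j, 0 ≤ Q i j)
    (v : Fin d → ℝ) (hv0 : ∀ i, 0 ≤ v i) (hvne : v ≠ 0) (hsub : ∀ i, v i ≤ (Q *ᵥ v) i) :
    ∃ t : ℝ, 1 ≤ t ∧ ∃ u : Fin d → ℝ, u ≠ 0 ∧ Q *ᵥ u = t • u := by
  set B : ℕ → Matrix (Fin d) (Fin d) ℝ :=
    fun k => Matrix.of fun i j => Q i j + ((k : ℝ) + 1)⁻¹ with hBdef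
  have hBpos : ∀ k i j, 0 < B k i j := fun k i j => by
    have : (0:ℝ) < ((k : ℝ) + 1)⁻¹ := by positivity
    simp only [hBdef, Matrix.of_apply]
    linarith [hQ i j]
  have hBmv : ∀ k (w : Fin d → ℝ), (∀ i, 0 ≤ w i) → ∀ i, (Q *ᵥ w) i ≤ (B k *ᵥ w) i := by
    intro k w hw i
    simp only [mulVec, dotProduct, hBdef, Matrix.of_apply]
    refine Finset.sum_le_sum fun j _ => ?_
    have : (0:ℝ) < ((k : ℝ) + 1)⁻¹ := by positivity
    nlinarith [hw j]
  have hex : ∀ k : ℕ, ∃ t : ℝ, 1 ≤ t ∧ ∃ u : Fin d → ℝ,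
      (∀ i, 0 ≤ u i) ∧ (∑ i, u i) = 1 ∧ B k *ᵥ u = t • u := by
    intro k
    exact pos_matrix_eigen (B k) (hBpos k) v hv0 hvne
      (fun i => (hsub i).trans (hBmv k v hv0 i))
  choose t ht1 u hu0 husum heig using hex
  set M : ℝ := ∑ i : Fin d, ∑ j : Fin d, (Q i j + 1) with hM
  have htM : ∀ k, t k ≤ M := by
    intro k
    have h1 : t k = ∑ i, (B k *ᵥ u k) i := by
      rw [heig k]
      simp only [Pi.smul_apply, smul_eq_mul, ← Finset.mul_sum, husum k, mul_one]
    rw [h1, hM]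
    refine Finset.sum_le_sum fun i _ => ?_
    simp only [mulVec, dotProduct, hBdef, Matrix.of_apply]
    refine Finset.sum_le_sum fun j _ => ?_
    have hle1 : u k j ≤ 1 := by
      rw [← husum k]
      exact Finset.single_le_sum (fun l _ => hu0 k l) (mem_univ j)
    have hinv : ((k:ℝ) + 1)⁻¹ ≤ 1 := by
      rw [inv_le_one_iff₀]; right; linarith [Nat.cast_nonneg (α := ℝ) k]
    nlinarith [hu0 k j, hQ i j, (by positivity : (0:ℝ) < ((k : ℝ) + 1)⁻¹)]
  -- compact set
  set s : Set (ℝ × (Fin d → ℝ)) :=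
    {p | 1 ≤ p.1 ∧ p.1 ≤ M ∧ (∀ i, 0 ≤ p.2 i) ∧ (∑ i, p.2 i) = 1} with hsdef
  have hclosed : IsClosed s := by
    have : s = {p : ℝ × (Fin d → ℝ) | 1 ≤ p.1} ∩ ({p | p.1 ≤ M} ∩
        ((⋂ i, {p | 0 ≤ p.2 i}) ∩ {p | ∑ i, p.2 i = 1})) := by
      ext p; simp only [hsdef, Set.mem_setOf_eq, Set.mem_inter_iff, Set.mem_iInter]
    rw [this]
    refine (isClosed_le continuous_const continuous_fst).inter
      ((isClosed_le continuous_fst continuous_const).inter (IsClosed.inter ?_ ?_))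
    · exact isClosed_iInter fun i =>
        isClosed_le continuous_const ((continuous_apply i).comp continuous_snd)
    · exact isClosed_eq (continuous_finset_sum _ fun i _ =>
        (continuous_apply i).comp continuous_snd) continuous_const
  have hsub' : s ⊆ Set.Icc ((1 : ℝ), (fun _ => 0 : Fin d → ℝ)) (M, fun _ => 1) := by
    intro p hp
    refine ⟨⟨hp.1, fun i => hp.2.2.1 i⟩, hp.2.1, fun i => ?_⟩
    rw [← hp.2.2.2]
    exact Finset.single_le_sum (fun l _ => hp.2.2.1 l) (mem_univ i)
  have hscpt : IsCompact s := IsCompact.of_isClosed_subset isCompact_Icc hclosed hsub'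
  have hmem : ∀ k, ((t k, u k) : ℝ × (Fin d → ℝ)) ∈ s :=
    fun k => ⟨ht1 k, htM k, hu0 k, husum k⟩
  obtain ⟨⟨l, w⟩, hlw, φ, hφ, htend⟩ := hscpt.tendsto_subseq hmem
  have hφtop : Tendsto φ atTop atTop := hφ.tendsto_atTop
  have htl : Tendsto (fun k => t (φ k)) atTop (𝓝 l) :=
    (continuous_fst.tendsto _).comp htend
  have huw : ∀ j, Tendsto (fun k => u (φ k) j) atTop (𝓝 (w j)) := fun j =>
    ((continuous_apply j).tendsto _).comp ((continuous_snd.tendsto _).comp htend)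
  have hinv0 : Tendsto (fun k => ((φ k : ℝ) + 1)⁻¹) atTop (𝓝 0) := by
    apply Tendsto.comp tendsto_inv_atTop_zero
    apply tendsto_atTop_add_const_right
    exact tendsto_natCast_atTop_atTop.comp hφtop
  refine ⟨l, hlw.1, w, ?_, funext fun i => ?_⟩
  · intro hw0
    have : (∑ i, w i) = 0 := by rw [hw0]; simp
    rw [hlw.2.2.2] at this
    exact one_ne_zero this
  · -- limits
    have hL : Tendsto (fun k => (B (φ k) *ᵥ u (φ k)) i) atTop (𝓝 ((Q *ᵥ w) i)) := by
      simp only [mulVec, dotProduct, hBdef, Matrix.of_apply]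
      refine tendsto_finset_sum _ fun j _ => ?_
      have h1 : Tendsto (fun k => Q i j + ((φ k : ℝ) + 1)⁻¹) atTop (𝓝 (Q i j)) := by
        simpa using (tendsto_const_nhds (x := Q i j)).add hinv0
      simpa using h1.mul (huw j)
    have hR : Tendsto (fun k => t (φ k) * u (φ k) i) atTop (𝓝 (l * w i)) :=
      htl.mul (huw i)
    have heq : (fun k => (B (φ k) *ᵥ u (φ k)) i) = fun k => t (φ k) * u (φ k) i := by
      funext k
      rw [heig (φ k)]
      simp [Pi.smul_apply]
    rw [heq] at hL
    have := tendsto_nhds_unique hL hR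
    simpa [Pi.smul_apply] using this

lemma no_subinvariant (P : Matrix (Fin d) (Fin d) ℝ) (hnonneg : ∀ i j, 0 ≤ P i j)
    (hspec : spectralRadius ℝ P < 1) (v : Fin d → ℝ) (hv0 : ∀ i, 0 ≤ v i)
    (hsub : ∀ i, v i ≤ (Pᵀ *ᵥ v) i) : v = 0 := by
  by_contra hvne
  obtain ⟨t, ht, u, hune, hu⟩ :=
    nonneg_matrix_eigen Pᵀ (fun i j => hnonneg j i) v hv0 hvne hsub
  have hmem : t ∈ spectrum ℝ P := by
    rw [spectrum.mem_iff]
    rw [Matrix.isUnit_iff_isUnit_det]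
    have hdet : (algebraMap ℝ (Matrix (Fin d) (Fin d) ℝ) t - P).det
        = (algebraMap ℝ (Matrix (Fin d) (Fin d) ℝ) t - Pᵀ).det := by
      rw [← Matrix.det_transpose (algebraMap ℝ (Matrix (Fin d) (Fin d) ℝ) t - P),
        Matrix.transpose_sub]
      congr 1
      congr 1
      rw [Matrix.algebraMap_eq_diagonal]
      exact Matrix.diagonal_transpose _
    have hker : (algebraMap ℝ (Matrix (Fin d) (Fin d) ℝ) t - Pᵀ) *ᵥ u = 0 := by
      rw [Matrix.sub_mulVec, Matrix.algebraMap_eq_diagonal]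
      rw [hu]
      funext i
      simp [Matrix.mulVec_diagonal, Algebra.algebraMap_eq_smul_one, Matrix.smul_mulVec, Matrix.diagonal_one, Matrix.one_mulVec]
    have hdet0 : (algebraMap ℝ (Matrix (Fin d) (Fin d) ℝ) t - Pᵀ).det = 0 :=
      (Matrix.exists_mulVec_eq_zero_iff).1 ⟨u, hune, hker⟩
    rw [hdet, hdet0]
    exact fun h => by simpa using h.ne_zero rfl
  have hle : (1 : ENNReal) ≤ spectralRadius ℝ P := by
    have h1 : (1 : ENNReal) ≤ (‖t‖₊ : ENNReal) := by
      rw [ENNReal.one_le_coe_iff]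
      rw [← NNReal.coe_le_coe]
      simp only [coe_nnnorm, NNReal.coe_one, Real.norm_eq_abs]
      rw [abs_of_nonneg (by linarith)]
      exact ht
    refine h1.trans ?_
    exact le_iSup₂ (f := fun k (_ : k ∈ spectrum ℝ P) => (‖k‖₊ : ENNReal)) t hmem
  exact absurd hspec (not_lt.2 hle)

lemma bounded_of_subinvariant_ineq (P : Matrix (Fin d) (Fin d) ℝ)
    (hnonneg : ∀ i j, 0 ≤ P i j) (hspec : spectralRadius ℝ P < 1) (h : Fin d → ℝ) :
    ∃ C : ℝ, ∀ y : Fin d → ℝ, (∀ i, 0 ≤ y i) → (∀ i, y i ≤ (Pᵀ *ᵥ y) i + h i) →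
      ∀ i, y i ≤ C := by
  by_contra hC
  push_neg at hC
  choose y hy0 hyle i' hyi' using fun k : ℕ => hC k
  haveI : Nonempty (Fin d) := ⟨i' 0⟩
  set m : ℕ → ℝ := fun k => Finset.univ.sup' (univ_nonempty) (y k) with hm
  have hmk : ∀ k : ℕ, (k : ℝ) < m k := fun k =>
    lt_of_lt_of_le (hyi' k) (Finset.le_sup' _ (mem_univ (i' k)))
  have hmpos : ∀ k : ℕ, 0 < m k := fun k => lt_of_le_of_lt (Nat.cast_nonneg k) (hmk k)
  have hym : ∀ k i, y k i ≤ m k := fun k i => Finset.le_sup' _ (mem_univ i)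
  set u : ℕ → Fin d → ℝ := fun k => (m k)⁻¹ • y k with hu
  set s : Set (Fin d → ℝ) :=
    {w | (∀ i, 0 ≤ w i ∧ w i ≤ 1) ∧ 1 ≤ ∑ i, w i} with hsdef
  have hclosed : IsClosed s := by
    have : s = (⋂ i, {w : Fin d → ℝ | 0 ≤ w i} ∩ {w | w i ≤ 1}) ∩
        {w | 1 ≤ ∑ i, w i} := by
      ext w
      simp only [hsdef, Set.mem_setOf_eq, Set.mem_inter_iff, Set.mem_iInter]
    rw [this]
    refine IsClosed.inter (isClosed_iInter fun i => IsClosed.inter ?_ ?_) ?_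
    · exact isClosed_le continuous_const (continuous_apply i)
    · exact isClosed_le (continuous_apply i) continuous_const
    · exact isClosed_le continuous_const (continuous_finset_sum _ fun i _ =>
        continuous_apply i)
  have hsub' : s ⊆ Set.Icc (fun _ => 0 : Fin d → ℝ) (fun _ => 1) :=
    fun w hw => ⟨fun i => (hw.1 i).1, fun i => (hw.1 i).2⟩
  have hscpt : IsCompact s := IsCompact.of_isClosed_subset isCompact_Icc hclosed hsub'
  have hmemu : ∀ k, u k ∈ s := by
    intro k
    refine ⟨fun i => ⟨mul_nonneg (inv_nonneg.2 (hmpos k).le) (hy0 k i), ?_⟩, ?_⟩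
    · show (m k)⁻¹ * y k i ≤ 1
      calc (m k)⁻¹ * y k i ≤ (m k)⁻¹ * m k :=
            mul_le_mul_of_nonneg_left (hym k i) (inv_nonneg.2 (hmpos k).le)
        _ = 1 := inv_mul_cancel₀ (hmpos k).ne'
    · -- sum ≥ 1 : there is an index attaining the sup
      obtain ⟨i₁, -, hi₁⟩ := Finset.exists_mem_eq_sup' (univ_nonempty) (y k)
      have hmk1 : m k = y k i₁ := hi₁
      have h1 : u k i₁ = 1 := by
        show (m k)⁻¹ * y k i₁ = 1
        rw [← hmk1]
        exact inv_mul_cancel₀ (hmpos k).ne'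
      calc (1:ℝ) = u k i₁ := h1.symm
        _ ≤ ∑ i, u k i := Finset.single_le_sum
            (fun i _ => mul_nonneg (inv_nonneg.2 (hmpos k).le) (hy0 k i)) (mem_univ i₁)
  obtain ⟨w, hws, φ, hφ, htend⟩ := hscpt.tendsto_subseq hmemu
  have huw : ∀ j, Tendsto (fun k => u (φ k) j) atTop (𝓝 (w j)) := fun j =>
    ((continuous_apply j).tendsto _).comp htend
  have hmtop : Tendsto (fun k => m (φ k)) atTop atTop := by
    apply tendsto_atTop_mono (fun k => (hmk (φ k)).le)
    exact tendsto_natCast_atTop_atTop.comp hφ.tendsto_atTop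
  have hwsub : ∀ i, w i ≤ (Pᵀ *ᵥ w) i := by
    intro i
    have hIneq : ∀ k, u (φ k) i ≤ (Pᵀ *ᵥ u (φ k)) i + h i / m (φ k) := by
      intro k
      have := hyle (φ k) i
      have hpos := hmpos (φ k)
      have hmv : (Pᵀ *ᵥ u (φ k)) i = (m (φ k))⁻¹ * (Pᵀ *ᵥ y (φ k)) i := by
        rw [hu, mulVec_smul]
        simp
      simp only [hu, Pi.smul_apply, smul_eq_mul]
      rw [hmv, div_eq_inv_mul, ← mul_add]
      exact mul_le_mul_of_nonneg_left this (inv_nonneg.2 hpos.le)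
    have hL : Tendsto (fun k => u (φ k) i) atTop (𝓝 (w i)) := huw i
    have hR : Tendsto (fun k => (Pᵀ *ᵥ u (φ k)) i + h i / m (φ k)) atTop
        (𝓝 ((Pᵀ *ᵥ w) i + 0)) := by
      refine Tendsto.add ?_ (Tendsto.div_atTop tendsto_const_nhds hmtop)
      simp only [mulVec, dotProduct]
      exact tendsto_finset_sum _ fun j _ => (tendsto_const_nhds).mul (huw j)
    have := le_of_tendsto_of_tendsto hL hR (Eventually.of_forall hIneq)
    linarith
  have hw0 := no_subinvariant P hnonneg hspec w (fun i => (hws.1 i).1) hwsub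
  have : (1:ℝ) ≤ 0 := by
    have := hws.2
    rw [hw0] at this
    simpa using this
  linarith

lemma sp_conclusion (P : Matrix (Fin d) (Fin d) ℝ)
    (hnonneg : ∀ i j, 0 ≤ P i j) (hspec : spectralRadius ℝ P < 1)
    (u y z : ℕ → Fin d → ℝ)
    (hsp : IsSPSol (1 - Pᵀ) 0 u y z)
    (hS : ∀ i, Tendsto (fun n => ∑ k ∈ Finset.Icc 1 n, u k i) atTop atTop) :
    (∃ H0 : Fin d → ℝ, ∀ n i, y n i < H0 i) ∧ ∃ N, ∀ n, N ≤ n → y n = y N := by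
  obtain ⟨hy0, hz0, hrec⟩ := hsp
  set S : ℕ → Fin d → ℝ := fun n i => ∑ k ∈ Finset.Icc 1 n, u k i with hSdef
  have hQ : ∀ i j, 0 ≤ Pᵀ i j := fun i j => hnonneg j i
  -- monotonicity
  have hmono : ∀ n i, y n i ≤ y (n + 1) i := by
    intro n i
    have := (hrec (n+1) (Nat.le_add_left 1 n)).2.2.1 i
    simp only [Nat.add_sub_cancel] at this
    simpa [sub_nonneg] using this
  have hmono' : ∀ m n, m ≤ n → ∀ i, y m i ≤ y n i := by
    intro m n hmn i
    induction n with
    | zero =>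
      have : m = 0 := by omega
      subst this; exact le_refl _
    | succ n ih =>
      rcases Nat.lt_or_ge m (n+1) with hlt | hge
      · exact (ih (by omega)).trans (hmono n i)
      · have : m = n + 1 := by omega
        subst this; exact le_refl _
  have hynn : ∀ n i, 0 ≤ y n i := by
    intro n i
    have := hmono' 0 n (Nat.zero_le n) i
    rw [hy0] at this
    simpa using this
  -- z identity
  have hzeq : ∀ n i, z n i = S n i + y n i - (Pᵀ *ᵥ y n) i := by
    intro n
    induction n with
    | zero =>
      intro i
      simp [hz0, hy0, hSdef]
    | succ n ih =>
      intro i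
      have hr := (hrec (n+1) (Nat.le_add_left 1 n)).1
      have hstep : z (n+1) i = z n i + u (n+1) i
          + ((y (n+1) i - y n i) - (Pᵀ *ᵥ (y (n+1) - y n)) i) := by
        rw [hr]
        simp only [Nat.add_sub_cancel, Pi.add_apply, Matrix.sub_mulVec,
          Matrix.one_mulVec, Pi.sub_apply]
      have hSstep : S (n+1) i = S n i + u (n+1) i := by
        simp only [hSdef]
        rw [Finset.sum_Icc_succ_top (Nat.le_add_left 1 n)]
      have hmvsub : (Pᵀ *ᵥ (y (n+1) - y n)) i = (Pᵀ *ᵥ y (n+1)) i - (Pᵀ *ᵥ y n) i := by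
        rw [Matrix.mulVec_sub]; rfl
      rw [hstep, ih i, hSstep, hmvsub]
      ring
  -- complementarity
  have hcomp : ∀ n, 1 ≤ n → ∀ i, y n i ≠ y (n-1) i → z n i = 0 := by
    intro n hn i hne
    have hdot := (hrec n hn).2.2.2
    have hznn := (hrec n hn).2.1
    have hdnn := (hrec n hn).2.2.1
    have : ∀ j ∈ Finset.univ, 0 ≤ z n j * (y n j - y (n-1) j) :=
      fun j _ => mul_nonneg (hznn j) (hdnn j)
    have hall := (Finset.sum_eq_zero_iff_of_nonneg this).1 hdot i (mem_univ i)
    have hpos : 0 < y n i - y (n-1) i := lt_of_le_of_ne (hdnn i) (by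
      intro hcon
      exact hne (by linarith [hcon.symm]))
    have := mul_eq_zero.1 hall
    rcases this with h | h
    · exact h
    · exact absurd h (by linarith)
  -- lower bound for S
  have hb : ∀ i, ∃ b : ℝ, ∀ n, b ≤ S n i := by
    intro i
    obtain ⟨b, hb⟩ := bddBelow_range_of_tendsto_atTop_atTop (hS i)
    exact ⟨b, fun n => hb (Set.mem_range_self n)⟩
  choose b hbS using hb
  set h : Fin d → ℝ := fun i => max 0 (-(b i)) with hh
  have hh0 : ∀ i, 0 ≤ h i := fun i => le_max_left _ _
  have hhS : ∀ n i, -(S n i) ≤ h i := fun n i =>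
    le_trans (neg_le_neg (hbS i n)) (le_max_right _ _)
  -- key inequality
  have hkey : ∀ n i, y n i ≤ (Pᵀ *ᵥ y n) i + h i := by
    intro n
    induction n with
    | zero =>
      intro i
      rw [hy0]
      have : (Pᵀ *ᵥ (0 : Fin d → ℝ)) i = 0 := by simp
      rw [this]
      simpa using hh0 i
    | succ n ih =>
      intro i
      by_cases heq : y (n+1) i = y n i
      · rw [heq]
        refine (ih i).trans ?_
        have := mulVec_mono hQ (fun j => hmono n j) i
        linarith
      · have hz := hcomp (n+1) (Nat.le_add_left 1 n) i (by
          simpa [Nat.add_sub_cancel] using heq)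
        have := hzeq (n+1) i
        rw [hz] at this
        have hSle := hhS (n+1) i
        linarith
  -- bound
  obtain ⟨C, hC⟩ := bounded_of_subinvariant_ineq P hnonneg hspec h
  have hyC : ∀ n i, y n i ≤ C := fun n i => hC (y n) (hynn n) (hkey n) i
  constructor
  · exact ⟨fun _ => C + 1, fun n i => lt_of_le_of_lt (hyC n i) (lt_add_one C)⟩
  -- eventual constancy
  set D : Fin d → ℝ := fun i => ∑ j, Pᵀ i j * C with hD
  have hPyD : ∀ n i, (Pᵀ *ᵥ y n) i ≤ D i := by
    intro n i
    simp only [mulVec, dotProduct, hD]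
    exact Finset.sum_le_sum fun j _ =>
      mul_le_mul_of_nonneg_left (hyC n j) (hQ i j)
  have hNi : ∀ i, ∃ Ni : ℕ, ∀ n, Ni ≤ n → D i + 1 ≤ S n i := by
    intro i
    have := (hS i).eventually_ge_atTop (D i + 1)
    exact Filter.eventually_atTop.1 this
  choose Ni hNi' using hNi
  set N : ℕ := (Finset.univ.sup Ni) + 1 with hN
  have hstill : ∀ n, N ≤ n → ∀ i, y n i = y (n-1) i := by
    intro n hn i
    by_contra hne
    have h1 : (1:ℕ) ≤ n := by omega
    have hz := hcomp n h1 i hne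
    have hzi := hzeq n i
    rw [hz] at hzi
    have hSn : D i + 1 ≤ S n i := by
      refine hNi' i n ?_
      have : Ni i ≤ Finset.univ.sup Ni := Finset.le_sup (mem_univ i)
      omega
    have := hPyD n i
    have := hynn n i
    linarith
  refine ⟨N, ?_⟩
  have haux : ∀ m, y (N + m) = y N := by
    intro m
    induction m with
    | zero => rfl
    | succ m ih =>
      funext i
      show y (N + m + 1) i = y N i
      have := hstill (N + m + 1) (by omega) i
      simp only [Nat.add_sub_cancel] at this
      rw [this, ih]
  intro n hn
  have : n = N + (n - N) := by omega
  rw [this, haux]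

end Aux

theorem stmt_13 {d : ℕ} {Ω : Type*} [MeasurableSpace Ω]
    (μ : Measure Ω) [IsProbabilityMeasure μ]
    (P : Matrix (Fin d) (Fin d) ℝ)
    (hdiag : ∀ i, P i i = 0) (hnonneg : ∀ i j, 0 ≤ P i j)
    (hspec : spectralRadius ℝ P < 1)
    (A : ℕ → Ω → ℝ) (X : ℕ → Ω → Fin d → ℝ) (c : Fin d → ℝ)
    (hAmeas : ∀ n, Measurable (A n)) (hXmeas : ∀ n, Measurable (X n))
    (hApos : ∀ n ω, 0 < A n ω) (hXnonneg : ∀ n ω i, 0 ≤ X n ω i)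
    (hAiid : iIndepFun A μ)
    (hAid : ∀ n, IdentDistrib (A n) (A 0) μ μ)
    (hXiid : iIndepFun X μ)
    (hXid : ∀ n, IdentDistrib (X n) (X 0) μ μ)
    (hAX : IndepFun (fun ω => fun n => A n ω) (fun ω => fun n => X n ω) μ)
    (hc : ∀ i, 0 < c i)
    (hAint : Integrable (A 0) μ)
    (hXint : ∀ i, Integrable (fun ω => X 0 ω i) μ)
    (hnet : ∀ i, 0 < ∫ ω, (c i * A 0 ω - X 0 ω i) ∂μ)
    (Y Z : ℕ → Ω → Fin d → ℝ)
    (hSP : ∀ ω, IsSPSol (1 - Pᵀ) 0 (fun n => A n ω • c - X n ω)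
      (fun n => Y n ω) (fun n => Z n ω)) :
    ∀ᵐ ω ∂μ, (∃ H0 : Fin d → ℝ, ∀ n i, Y n ω i < H0 i) ∧
      ∃ N, ∀ n, N ≤ n → Y n ω = Y N ω := by
  -- SLLN for A
  have hA_lln : ∀ᵐ ω ∂μ, Tendsto (fun n : ℕ => (∑ k ∈ range n, A k ω) / n)
      atTop (𝓝 (μ[A 0])) :=
    strong_law_ae_real A hAint (fun i j hij => hAiid.indepFun hij) hAid
  -- SLLN for each coordinate of X
  have hX_lln : ∀ i : Fin d, ∀ᵐ ω ∂μ,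
      Tendsto (fun n : ℕ => (∑ k ∈ range n, X k ω i) / n)
        atTop (𝓝 (μ[fun ω => X 0 ω i])) := by
    intro i
    exact strong_law_ae_real (fun n ω => X n ω i) (hXint i)
      (fun m n hmn => (hXiid.indepFun hmn).comp
        (measurable_pi_apply i) (measurable_pi_apply i))
      (fun n => (hXid n).comp (measurable_pi_apply i))
  filter_upwards [hA_lln, ae_all_iff.2 hX_lln] with ω hA hX
  -- per-coordinate divergence of partial sums
  have hS : ∀ i, Tendsto
      (fun n => ∑ k ∈ Finset.Icc 1 n, ((fun n => A n ω • c - X n ω) k i))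
      atTop atTop := by
    intro i
    set g : ℕ → ℝ := fun k => A k ω * c i - X k ω i with hg
    have hgu : ∀ k, ((fun n => A n ω • c - X n ω) k i) = g k := by
      intro k; simp [hg, Pi.smul_apply, smul_eq_mul]
    set m : ℝ := μ[A 0] * c i - μ[fun ω => X 0 ω i] with hm
    have hmpos : 0 < m := by
      have hint : ∫ ω', (c i * A 0 ω' - X 0 ω' i) ∂μ
          = c i * (μ[A 0]) - μ[fun ω' => X 0 ω' i] := by
        rw [integral_sub (hAint.const_mul (c i)) (hXint i)]
        rw [MeasureTheory.integral_const_mul]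
      have := hnet i
      rw [hint] at this
      rw [hm]; linarith [this]
    -- average tendsto
    have havg : Tendsto (fun n : ℕ => (∑ k ∈ range n, g k) / n) atTop (𝓝 m) := by
      have heqfun : (fun n : ℕ => (∑ k ∈ range n, g k) / n)
          = fun n : ℕ => ((∑ k ∈ range n, A k ω) / n) * c i
            - (∑ k ∈ range n, X k ω i) / n := by
        funext n
        rw [hg]
        rw [Finset.sum_sub_distrib, ← Finset.sum_mul]
        ring
      rw [heqfun, hm]
      exact (hA.mul_const (c i)).sub (hX i)
    -- partial sums tendsto atTop
    have hT : Tendsto (fun n : ℕ => ∑ k ∈ range n, g k) atTop atTop := by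
      have hev : ∀ᶠ n : ℕ in atTop, m / 2 * (n : ℝ) ≤ ∑ k ∈ range n, g k := by
        filter_upwards [havg.eventually (eventually_ge_nhds
          (by linarith : m / 2 < m)), eventually_ge_atTop 1] with n hn hn1
        have hnpos : (0:ℝ) < n := by exact_mod_cast hn1
        rw [le_div_iff₀ hnpos] at hn
        linarith
      exact tendsto_atTop_mono' _ hev
        ((tendsto_natCast_atTop_atTop).const_mul_atTop (by linarith))
    -- shift to Icc 1 n
    have hicc : ∀ n : ℕ, ∑ k ∈ Finset.Icc 1 n, g k = (∑ k ∈ range (n+1), g k) - g 0 := by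
      intro n
      have hins : range (n+1) = insert 0 (Finset.Icc 1 n) := by
        ext k
        simp only [Finset.mem_range, Finset.mem_insert, Finset.mem_Icc]
        omega
      rw [hins, Finset.sum_insert (by simp)]
      ring
    have : Tendsto (fun n : ℕ => (∑ k ∈ range (n+1), g k) - g 0) atTop atTop := by
      apply tendsto_atTop_add_const_right
      exact hT.comp (tendsto_add_atTop_nat 1)
    refine Tendsto.congr' ?_ this
    filter_upwards with n
    rw [← hicc n]
    exact Finset.sum_congr rfl fun k _ => (hgu k).symm
  have := sp_conclusion P hnonneg hspec (fun n => A n ω • c - X n ω)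
    (fun n => Y n ω) (fun n => Z n ω) (hSP ω) hS
  exact this
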